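/- arXiv:1912.06714 — 2 statements merged into one kernel-verified Lean document; each statement's English description precedes it below -/
import Mathlib

section
/- Let (x_k)_{k≥0} be a nonnegative, monotone nonincreasing real sequence and let G = {k : x_k < 2·x_{k+1}}. Then for all n ≥ 0, ∑_{k=0}^{n} x_k ≤ 3·x_0 + 3·∑_{k∈G, k≤n} x_{k+1}. -/
private lemma aux0 (x : ℕ → ℝ) (hnn : ∀ k, 0 ≤ x k) (hmono : ∀ k, x (k + 1) ≤ x k) :
    ∀ d m, ∑ k ∈ Finset.range d, x (m + k) ≤
      2 * x m + 3 * ∑ k ∈ Finset.range d,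
        (if x (m + k) < 2 * x (m + k + 1) then x (m + k + 1) else 0) := by
  intro d
  induction d with
  | zero => intro m; simpa using by linarith [hnn m]
  | succ d ih =>
    intro m
    rw [Finset.sum_range_succ' (fun k => x (m + k)),
        Finset.sum_range_succ' (fun k => (if x (m + k) < 2 * x (m + k + 1) then x (m + k + 1) else 0))]
    have e1 : ∀ i ∈ Finset.range d, x (m + (i + 1)) = x ((m + 1) + i) := by
      intro i _; congr 1; omega
    have e2 : ∀ i ∈ Finset.range d,
        (if x (m + (i + 1)) < 2 * x (m + (i + 1) + 1) then x (m + (i + 1) + 1) else 0) =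
        (if x ((m + 1) + i) < 2 * x ((m + 1) + i + 1) then x ((m + 1) + i + 1) else 0) := by
      intro i _
      have h : m + (i + 1) = (m + 1) + i := by omega
      rw [h]
    rw [Finset.sum_congr rfl e1, Finset.sum_congr rfl e2]
    have H := ih (m + 1)
    have key : x (m + 0) + 2 * x (m + 1) ≤
        2 * x m + 3 * (if x (m + 0) < 2 * x (m + 0 + 1) then x (m + 0 + 1) else 0) := by
      simp only [Nat.add_zero]
      by_cases h : x m < 2 * x (m + 1)
      · simp only [if_pos h]
        have := hnn m; have := hnn (m + 1); linarith
      · simp only [if_neg h]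
        push_neg at h; linarith
    linarith
  
theorem stmt0 (x : ℕ → ℝ) (hnn : ∀ k, 0 ≤ x k) (hmono : ∀ k, x (k + 1) ≤ x k) (n : ℕ) :
    ∑ k ∈ Finset.range (n + 1), x k ≤
      3 * x 0 + 3 * ∑ k ∈ (Finset.range (n + 1)).filter (fun k => x k < 2 * x (k + 1)), x (k + 1) := by
  have H := aux0 x hnn hmono (n + 1) 0
  simp only [Nat.zero_add] at H
  rw [Finset.sum_filter]
  have := hnn 0
  linarith
end

section
/- Let (x_k)_{k≥0} be nonnegative and nonincreasing with ∑_k x_k = ∞, and let G = {k : x_k < 2·x_{k+1}}. Then ∑_{k∈G} x_{k+1} = ∞. -/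
theorem stmt10 (x : ℕ → ℝ) (hnn : ∀ k, 0 ≤ x k) (hmono : ∀ k, x (k + 1) ≤ x k)
    (hdiv : ¬ Summable x) :
    ¬ Summable (fun k => if x k < 2 * x (k + 1) then x (k + 1) else 0) := by
  intro hy
  set y : ℕ → ℝ := fun k => if x k < 2 * x (k + 1) then x (k + 1) else 0 with hydef
  have hynn : ∀ k, 0 ≤ y k := by
    intro k
    simp only [hydef]
    split_ifs with h <;> simp [hnn]
  have hkey : ∀ k, x (k + 1) ≤ y k + x k / 2 := by
    intro k
    simp only [hydef]
    split_ifs with h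
    · nlinarith [hnn k]
    · push_neg at h
      linarith
  set Y := ∑' k, y k with hYdef
  have hYn : ∀ n, ∑ k ∈ Finset.range n, y k ≤ Y :=
    fun n => Summable.sum_le_tsum _ (fun i _ => hynn i) hy
  set S : ℕ → ℝ := fun n => ∑ k ∈ Finset.range n, x k with hSdef
  have hSmono : ∀ n, S n ≤ S (n + 1) := by
    intro n
    simp only [hSdef, Finset.sum_range_succ]
    linarith [hnn n]
  have hbound : ∀ n, S n ≤ 2 * (x 0 + Y) := by
    intro n
    cases n with
    | zero => simp only [hSdef, Finset.range_zero, Finset.sum_empty]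
              have : 0 ≤ Y := tsum_nonneg hynn
              linarith [hnn 0]
    | succ m =>
      have h1 : S (m + 1) = x 0 + ∑ k ∈ Finset.range m, x (k + 1) := by
        simp only [hSdef]
        rw [Finset.sum_range_succ']
        ring
      have h2 : ∑ k ∈ Finset.range m, x (k + 1) ≤
          (∑ k ∈ Finset.range m, y k) + (∑ k ∈ Finset.range m, x k) / 2 := by
        rw [Finset.sum_div, ← Finset.sum_add_distrib]
        exact Finset.sum_le_sum fun i _ => hkey i
      have h3 : S m ≤ S (m + 1) := hSmono m
      have h4 : ∑ k ∈ Finset.range m, y k ≤ Y := hYn m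
      have h5 : S (m + 1) ≤ x 0 + Y + S (m + 1) / 2 := by
        rw [h1] at h3 ⊢
        simp only [hSdef] at h3 ⊢
        linarith
      linarith
  exact hdiv (summable_of_sum_range_le hnn hbound)
end
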